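/- arXiv:2201.09078 — 3 statements merged into one kernel-verified Lean document; each statement's English description precedes it below -/
import Mathlib

section
/- Let φ₁, φ₂, ψ be complex numbers with |φ₁| < 1, |φ₂| < 1, |ψ| ≤ 1, and let r ∈ (0,1). Then the quantity F = rφ₁ + (1-r)φ₂ + r(1-r)(φ₁-φ₂)²ψ / (1 - ((1-r)φ₁ + rφ₂)ψ) is well-defined (the denominator is nonzero) and satisfies |F| < 1. -/
open Complex

/-- Rotation identity for normSq. -/
lemma rot_normSq (s t : ℝ) (x y : ℂ) :
    Complex.normSq ((s:ℂ)*x + (t:ℂ)*y) + Complex.normSq ((t:ℂ)*x - (s:ℂ)*y)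
      = (s^2 + t^2) * (Complex.normSq x + Complex.normSq y) := by
  simp only [Complex.normSq_apply]
  simp [Complex.add_re, Complex.add_im, Complex.sub_re, Complex.sub_im,
    Complex.mul_re, Complex.mul_im, Complex.ofReal_re, Complex.ofReal_im]
  ring

theorem linear_fractional_maps_into_disc
    (φ₁ φ₂ ψ : ℂ) (h₁ : ‖φ₁‖ < 1) (h₂ : ‖φ₂‖ < 1) (hψ : ‖ψ‖ ≤ 1)
    (r : ℝ) (hr : r ∈ Set.Ioo (0:ℝ) 1) :
    1 - ((1 - r) • φ₁ + r • φ₂) * ψ ≠ 0 ∧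
    ‖r • φ₁ + (1 - r) • φ₂ +
        (r * (1 - r)) • ((φ₁ - φ₂) ^ 2 * ψ / (1 - ((1 - r) • φ₁ + r • φ₂) * ψ))‖ < 1 := by
  obtain ⟨hr0, hr1⟩ := hr
  set s : ℝ := Real.sqrt r with hs_def
  set t : ℝ := Real.sqrt (1 - r) with ht_def
  have hs2 : s^2 = r := Real.sq_sqrt hr0.le
  have ht2 : t^2 = 1 - r := Real.sq_sqrt (by linarith)
  have hst : s^2 + t^2 = 1 := by rw [hs2, ht2]; ring
  have hs2c : ((s:ℂ))^2 = (r:ℂ) := by exact_mod_cast congrArg (Complex.ofReal) hs2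
  have ht2c : ((t:ℂ))^2 = ((1 - r : ℝ):ℂ) := by exact_mod_cast congrArg (Complex.ofReal) ht2
  set A : ℂ := (s:ℂ)^2*φ₁ + (t:ℂ)^2*φ₂ with hA_def
  set B : ℂ := (s:ℂ)*(t:ℂ)*(φ₁ - φ₂) with hB_def
  set D : ℂ := (t:ℂ)^2*φ₁ + (s:ℂ)^2*φ₂ with hD_def
  set ρ : ℝ := max ‖φ₁‖ ‖φ₂‖ with hρ_def
  have hρ1 : ρ < 1 := max_lt h₁ h₂
  have hρ0 : 0 ≤ ρ := le_trans (norm_nonneg _) (le_max_left _ _)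
  have hn1 : Complex.normSq φ₁ ≤ ρ^2 := by
    rw [Complex.normSq_eq_norm_sq]
    exact pow_le_pow_left₀ (norm_nonneg _) (le_max_left _ _) 2
  have hn2 : Complex.normSq φ₂ ≤ ρ^2 := by
    rw [Complex.normSq_eq_norm_sq]
    exact pow_le_pow_left₀ (norm_nonneg _) (le_max_right _ _) 2
  -- key quadratic form inequality
  have key : ∀ z w : ℂ, Complex.normSq (A*z + B*w) + Complex.normSq (B*z + D*w)
      ≤ ρ^2 * (Complex.normSq z + Complex.normSq w) := by
    intro z w
    set p : ℂ := (s:ℂ)*z + (t:ℂ)*w with hp_def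
    set q : ℂ := (t:ℂ)*z - (s:ℂ)*w with hq_def
    have e1 : A*z + B*w = (s:ℂ)*(φ₁*p) + (t:ℂ)*(φ₂*q) := by
      rw [hA_def, hB_def, hp_def, hq_def]; ring
    have e2 : B*z + D*w = (t:ℂ)*(φ₁*p) - (s:ℂ)*(φ₂*q) := by
      rw [hB_def, hD_def, hp_def, hq_def]; ring
    rw [e1, e2, rot_normSq s t (φ₁*p) (φ₂*q), hst, one_mul]
    have epq : Complex.normSq p + Complex.normSq q
        = Complex.normSq z + Complex.normSq w := by
      rw [hp_def, hq_def, rot_normSq s t z w, hst, one_mul]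
    rw [Complex.normSq_mul, Complex.normSq_mul]
    have l1 : Complex.normSq φ₁ * Complex.normSq p ≤ ρ^2 * Complex.normSq p :=
      mul_le_mul_of_nonneg_right hn1 (Complex.normSq_nonneg p)
    have l2 : Complex.normSq φ₂ * Complex.normSq q ≤ ρ^2 * Complex.normSq q :=
      mul_le_mul_of_nonneg_right hn2 (Complex.normSq_nonneg q)
    calc Complex.normSq φ₁ * Complex.normSq p + Complex.normSq φ₂ * Complex.normSq q
        ≤ ρ^2 * Complex.normSq p + ρ^2 * Complex.normSq q := add_le_add l1 l2
      _ = ρ^2 * (Complex.normSq z + Complex.normSq w) := by rw [← mul_add, epq]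
  -- ‖D‖ ≤ ρ
  have hDρ : Complex.normSq D ≤ ρ^2 := by
    have := key 0 1
    simp only [mul_zero, mul_one, zero_add, Complex.normSq_zero, Complex.normSq_one] at this
    nlinarith [Complex.normSq_nonneg B]
  have hψsq : Complex.normSq ψ ≤ 1 := by
    rw [Complex.normSq_eq_norm_sq]
    nlinarith [norm_nonneg ψ]
  -- denominator
  have ht2c' : ((t:ℂ))^2 = 1 - (r:ℂ) := by rw [ht2c]; push_cast; ring
  have hBB : B^2 = ((r:ℂ)*(1-(r:ℂ)))*(φ₁-φ₂)^2 := by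
    rw [hB_def, mul_pow, mul_pow, hs2c, ht2c']
  have hDexpr : ((1 - r : ℝ)) • φ₁ + (r:ℝ) • φ₂ = D := by
    rw [hD_def, hs2c, ht2c', Complex.real_smul, Complex.real_smul]
    push_cast
    ring
  have hden : (1 : ℂ) - D * ψ ≠ 0 := by
    intro h
    have hD1 : D * ψ = 1 := by linear_combination -h
    have : Complex.normSq (D * ψ) = 1 := by rw [hD1]; simp
    rw [Complex.normSq_mul] at this
    nlinarith [Complex.normSq_nonneg D, Complex.normSq_nonneg ψ]
  constructor
  · rw [hDexpr]; exact hden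
  · rw [hDexpr]
    set v : ℂ := B / (1 - D*ψ) with hv_def
    have hv : B + D*(ψ*v) = v := by
      rw [hv_def]
      field_simp
      ring
    have hF : (r:ℝ) • φ₁ + ((1 - r : ℝ)) • φ₂ +
        (r * (1 - r)) • ((φ₁ - φ₂) ^ 2 * ψ / (1 - D * ψ)) = A + B*(ψ*v) := by
      have e : B*(ψ*v) = ((r:ℂ)*(1-(r:ℂ))*(φ₁-φ₂)^2*ψ)/(1-D*ψ) := by
        have e2 : B*(ψ*v) = (B^2*ψ)/(1-D*ψ) := by
          rw [hv_def]; field_simp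
        rw [e2, hBB]
      rw [e, hA_def, hs2c, ht2c', Complex.real_smul, Complex.real_smul, Complex.real_smul]
      push_cast
      ring
    rw [hF]
    have hk := key 1 (ψ*v)
    rw [mul_one, mul_one] at hk
    rw [hv] at hk
    simp only [Complex.normSq_one] at hk
    have hψv : Complex.normSq (ψ*v) ≤ Complex.normSq v := by
      rw [Complex.normSq_mul]
      nlinarith [Complex.normSq_nonneg v]
    have hFsq : Complex.normSq (A + B*(ψ*v)) ≤ ρ^2 := by
      have h1ρ : ρ^2 ≤ 1 := by nlinarith
      have h1' : ρ^2 * Complex.normSq (ψ*v) ≤ ρ^2 * Complex.normSq v :=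
        mul_le_mul_of_nonneg_left hψv (sq_nonneg ρ)
      have h2' : ρ^2 * Complex.normSq v ≤ Complex.normSq v :=
        mul_le_of_le_one_left (Complex.normSq_nonneg v) h1ρ
      linarith [hk, h1', h2']
    have : Complex.normSq (A + B*(ψ*v)) < 1 := lt_of_le_of_lt hFsq (by nlinarith)
    rw [Complex.normSq_eq_norm_sq] at this
    have h2 : ‖A + B*(ψ*v)‖^2 < 1^2 := by rw [one_pow]; exact this
    exact lt_of_pow_lt_pow_left₀ 2 zero_le_one h2
end

section
/- For (s,p) ∈ ℂ² with |s| < 2, the supremum over ω in the unit circle of |Φ_ω(s,p)|, where Φ_ω(s,p) = (2ωp - s)/(2 - ωs), equals (2|s - s̄p| + |s² - 4p|)/(4 - |s|²). -/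
open Complex

lemma norm_eq_of_mul_conj_eq {a b : ℂ}
    (h : a * (starRingEnd ℂ) a = b * (starRingEnd ℂ) b) : ‖a‖ = ‖b‖ := by
  have h2 : Complex.normSq a = Complex.normSq b := by
    rw [Complex.mul_conj, Complex.mul_conj] at h
    exact_mod_cast h
  rw [Complex.normSq_eq_norm_sq, Complex.normSq_eq_norm_sq] at h2
  exact (sq_eq_sq₀ (norm_nonneg _) (norm_nonneg _)).mp h2

lemma den_ne {s ω : ℂ} (hs : ‖s‖ < 2) (hω : ‖ω‖ = 1) : 2 - ω * s ≠ 0 := by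
  intro h
  have h2 : (2 : ℂ) = ω * s := by linear_combination h
  have h3 : ‖(2:ℂ)‖ = ‖ω * s‖ := by rw [h2]
  rw [norm_mul, hω, one_mul] at h3
  simp only [Complex.norm_ofNat] at h3
  linarith

lemma key_dist (s p ω : ℂ) (hs : ‖s‖ < 2) (hω : ‖ω‖ = 1) :
    ‖(2 * ω * p - s) / (2 - ω * s) -
        2 * (starRingEnd ℂ s * p - s) / ((4 - ‖s‖ ^ 2 : ℝ) : ℂ)‖ =
      ‖s ^ 2 - 4 * p‖ / (4 - ‖s‖ ^ 2) := by
  have hk : (0:ℝ) < 4 - ‖s‖ ^ 2 := by nlinarith [norm_nonneg s]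
  obtain ⟨K, hKdef⟩ : ∃ K : ℂ, K = ((4 - ‖s‖ ^ 2 : ℝ) : ℂ) := ⟨_, rfl⟩
  rw [← hKdef]
  have hK0 : K ≠ 0 := by
    rw [hKdef]; exact_mod_cast Complex.ofReal_ne_zero.mpr hk.ne'
  have hKnorm : ‖K‖ = 4 - ‖s‖ ^ 2 := by
    rw [hKdef, Complex.norm_real, Real.norm_eq_abs, abs_of_pos hk]
  have hK : K = 4 - s * starRingEnd ℂ s := by
    rw [hKdef, Complex.mul_conj]
    push_cast [Complex.normSq_eq_norm_sq]
    ring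
  have hd : 2 - ω * s ≠ 0 := den_ne hs hω
  have hω0 : ω ≠ 0 := by
    intro h; rw [h, norm_zero] at hω; norm_num at hω
  have hconjω : starRingEnd ℂ ω = ω⁻¹ := by
    have h1 : ω * starRingEnd ℂ ω = 1 := by
      rw [Complex.mul_conj]
      rw [Complex.normSq_eq_norm_sq, hω]
      norm_num
    field_simp
    linear_combination h1
  set N : ℂ := (2 * ω * p - s) * K
      - 2 * (starRingEnd ℂ s * p - s) * (2 - ω * s) with hN
  have hfc : (2 * ω * p - s) / (2 - ω * s) -
      2 * (starRingEnd ℂ s * p - s) / K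
      = N / ((2 - ω * s) * K) := by
    rw [hN]; field_simp
  have hmc : N * starRingEnd ℂ N =
      ((s ^ 2 - 4 * p) * (2 - ω * s)) * starRingEnd ℂ ((s ^ 2 - 4 * p) * (2 - ω * s)) := by
    rw [hN, hK]
    simp only [map_sub, map_mul, map_add, map_ofNat, conj_conj, map_pow, map_one]
    rw [hconjω]
    field_simp
    ring
  have hNn : ‖N‖ = ‖s ^ 2 - 4 * p‖ * ‖2 - ω * s‖ := by
    rw [← norm_mul]; exact norm_eq_of_mul_conj_eq hmc
  rw [hfc, norm_div, hNn, norm_mul, hKnorm]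
  have hdn : ‖2 - ω * s‖ ≠ 0 := norm_ne_zero_iff.mpr hd
  rw [div_eq_div_iff (mul_ne_zero hdn hk.ne') hk.ne']
  ring

lemma exists_hit (s p : ℂ) (hs : ‖s‖ < 2) (hA : s ^ 2 - 4 * p ≠ 0) (w : ℂ)
    (hwc : ‖w - 2 * (starRingEnd ℂ s * p - s) / ((4 - ‖s‖ ^ 2 : ℝ) : ℂ)‖ =
      ‖s ^ 2 - 4 * p‖ / (4 - ‖s‖ ^ 2)) :
    ∃ ω : ℂ, ‖ω‖ = 1 ∧ (2 * ω * p - s) / (2 - ω * s) = w := by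
  have hk : (0:ℝ) < 4 - ‖s‖ ^ 2 := by nlinarith [norm_nonneg s]
  obtain ⟨K, hKdef⟩ : ∃ K : ℂ, K = ((4 - ‖s‖ ^ 2 : ℝ) : ℂ) := ⟨_, rfl⟩
  rw [← hKdef] at hwc
  have hK0 : K ≠ 0 := by
    rw [hKdef]; exact_mod_cast Complex.ofReal_ne_zero.mpr hk.ne'
  have hK : K = 4 - s * starRingEnd ℂ s := by
    rw [hKdef, Complex.mul_conj]
    push_cast [Complex.normSq_eq_norm_sq]
    ring
  have hK0' : (4 : ℂ) - s * starRingEnd ℂ s ≠ 0 := hK ▸ hK0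
  have hKconj : starRingEnd ℂ K = K := by
    rw [hK]; simp only [map_sub, map_mul, map_ofNat, conj_conj]; ring
  set c : ℂ := 2 * (starRingEnd ℂ s * p - s) / K with hc
  -- the algebraic circle identity
  have hid : (2 * w + s) * starRingEnd ℂ (2 * w + s)
      - (2 * p + w * s) * starRingEnd ℂ (2 * p + w * s)
      = K * ((w - c) * starRingEnd ℂ (w - c))
        - (s ^ 2 - 4 * p) * starRingEnd ℂ (s ^ 2 - 4 * p) / K := by
    rw [hc]
    simp only [map_sub, map_mul, map_add, map_div₀, map_ofNat, conj_conj, map_pow]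
    rw [hKconj, hK]
    field_simp
    ring
  have e1 : (w - c) * starRingEnd ℂ (w - c) =
      (((‖s ^ 2 - 4 * p‖ / (4 - ‖s‖ ^ 2)) ^ 2 : ℝ) : ℂ) := by
    rw [Complex.mul_conj, ← hwc]
    rw [Complex.normSq_eq_norm_sq]
  have e2 : (s ^ 2 - 4 * p) * starRingEnd ℂ (s ^ 2 - 4 * p) =
      ((‖s ^ 2 - 4 * p‖ ^ 2 : ℝ) : ℂ) := by
    rw [Complex.mul_conj]
    rw [Complex.normSq_eq_norm_sq]
  have hzero : K * ((w - c) * starRingEnd ℂ (w - c))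
      - (s ^ 2 - 4 * p) * starRingEnd ℂ (s ^ 2 - 4 * p) / K = 0 := by
    rw [e1, e2, hKdef]
    norm_cast
    have hk' : (4 - ‖s‖ ^ 2) ≠ 0 := hk.ne'
    field_simp
    ring
  have hmc : (2 * w + s) * starRingEnd ℂ (2 * w + s)
      = (2 * p + w * s) * starRingEnd ℂ (2 * p + w * s) := by
    have := hid.trans hzero
    linear_combination this
  have hnorm : ‖2 * w + s‖ = ‖2 * p + w * s‖ := norm_eq_of_mul_conj_eq hmc
  have hne : 2 * p + w * s ≠ 0 := by
    intro h
    have h1 : ‖2 * w + s‖ = 0 := by rw [hnorm, h, norm_zero]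
    have h2 : 2 * w + s = 0 := norm_eq_zero.mp h1
    exact hA (by linear_combination s * h2 - 2 * h)
  refine ⟨(2 * w + s) / (2 * p + w * s), ?_, ?_⟩
  · rw [norm_div, hnorm, div_self (norm_ne_zero_iff.mpr hne)]
  · have hωn : ‖(2 * w + s) / (2 * p + w * s)‖ = 1 := by
      rw [norm_div, hnorm, div_self (norm_ne_zero_iff.mpr hne)]
    have hd : 2 - (2 * w + s) / (2 * p + w * s) * s ≠ 0 := den_ne hs hωn
    rw [div_eq_iff hd]
    field_simp
    ring

theorem Phi_sup_abs (s p : ℂ) (hs : ‖s‖ < 2) :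
    (⨆ ω : {ω : ℂ // ‖ω‖ = 1}, ‖(2 * (ω : ℂ) * p - s) / (2 - (ω : ℂ) * s)‖) =
      (2 * ‖s - starRingEnd ℂ s * p‖ + ‖s ^ 2 - 4 * p‖) / (4 - ‖s‖ ^ 2) := by
  have hk : (0:ℝ) < 4 - ‖s‖ ^ 2 := by nlinarith [norm_nonneg s]
  set c : ℂ := 2 * (starRingEnd ℂ s * p - s) / ((4 - ‖s‖ ^ 2 : ℝ) : ℂ) with hc
  set r : ℝ := ‖s ^ 2 - 4 * p‖ / (4 - ‖s‖ ^ 2) with hr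
  have hr0 : 0 ≤ r := div_nonneg (norm_nonneg _) hk.le
  have hcnorm : ‖c‖ = 2 * ‖s - starRingEnd ℂ s * p‖ / (4 - ‖s‖ ^ 2) := by
    rw [hc, norm_div, norm_mul, Complex.norm_real, Real.norm_eq_abs, abs_of_pos hk,
      Complex.norm_ofNat, norm_sub_rev]
  have hM : (2 * ‖s - starRingEnd ℂ s * p‖ + ‖s ^ 2 - 4 * p‖) / (4 - ‖s‖ ^ 2)
      = ‖c‖ + r := by
    rw [hcnorm, hr]; ring
  rw [hM]
  have upper : ∀ ω : {ω : ℂ // ‖ω‖ = 1},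
      ‖(2 * (ω : ℂ) * p - s) / (2 - (ω : ℂ) * s)‖ ≤ ‖c‖ + r := by
    rintro ⟨ω, hω⟩
    have h1 := key_dist s p ω hs hω
    rw [← hc, ← hr] at h1
    calc ‖(2 * ω * p - s) / (2 - ω * s)‖
        = ‖((2 * ω * p - s) / (2 - ω * s) - c) + c‖ := by ring_nf
      _ ≤ ‖(2 * ω * p - s) / (2 - ω * s) - c‖ + ‖c‖ := norm_add_le _ _
      _ = ‖c‖ + r := by rw [h1]; ring
  have attain : ∃ x : {ω : ℂ // ‖ω‖ = 1},
      ‖(2 * (x : ℂ) * p - s) / (2 - (x : ℂ) * s)‖ = ‖c‖ + r := by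
    by_cases hA : s ^ 2 - 4 * p = 0
    · -- r = 0 and the function is constantly c
      have hr' : r = 0 := by rw [hr, hA, norm_zero, zero_div]
      refine ⟨⟨1, by simp⟩, ?_⟩
      have h1 := key_dist s p 1 hs (by simp)
      rw [← hc, ← hr] at h1
      rw [hr'] at h1
      have h2 : (2 * (1:ℂ) * p - s) / (2 - (1:ℂ) * s) = c :=
        sub_eq_zero.mp (norm_eq_zero.mp h1)
      rw [h2, hr', add_zero]
    · by_cases hc0 : c = 0
      · refine ⟨⟨1, by simp⟩, ?_⟩
        have h1 := key_dist s p 1 hs (by simp)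
        rw [← hc, ← hr, hc0, sub_zero] at h1
        rw [h1, hc0, norm_zero, zero_add]
      · have hcn : (0:ℝ) < ‖c‖ := norm_pos_iff.mpr hc0
        set w : ℂ := c * (((‖c‖ + r) / ‖c‖ : ℝ) : ℂ) with hw
        have hwnorm : ‖w‖ = ‖c‖ + r := by
          rw [hw, norm_mul, Complex.norm_real, Real.norm_eq_abs,
            _root_.abs_of_nonneg (by positivity)]
          rw [mul_comm, div_mul_cancel₀ _ hcn.ne']
        have hwc : ‖w - c‖ = r := by
          have h3 : w - c = c * ((r / ‖c‖ : ℝ) : ℂ) := by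
            rw [hw]
            have : ((‖c‖ + r) / ‖c‖ : ℝ) = 1 + r / ‖c‖ := by
              rw [add_div, div_self hcn.ne']
            rw [this]
            push_cast
            ring
          rw [h3, norm_mul, Complex.norm_real, Real.norm_eq_abs,
            _root_.abs_of_nonneg (by positivity)]
          rw [mul_comm, div_mul_cancel₀ _ hcn.ne']
        obtain ⟨ω, hω1, hω2⟩ := exists_hit s p hs hA w (by rw [← hc, ← hr]; exact hwc)
        exact ⟨⟨ω, hω1⟩, by rw [hω2, hwnorm]⟩
  haveI : Nonempty {ω : ℂ // ‖ω‖ = 1} := ⟨⟨1, by simp⟩⟩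
  obtain ⟨x, hx⟩ := attain
  apply le_antisymm
  · exact ciSup_le upper
  · rw [← hx]
    exact le_ciSup ⟨‖c‖ + r, by rintro _ ⟨y, rfl⟩; exact upper y⟩ x
end

section
/- Let m be a holomorphic automorphism of the unit disc with two distinct fixed points ω₁, ω₂ on the unit circle (a hyperbolic automorphism), and define h_m : 𝔻 → ℂ² by h_m(z) = (z + m(z), z·m(z)). Then for ω on the unit circle, the function z ↦ Φ_ω(h_m(z)) = (2ω·z·m(z) - z - m(z))/(2 - ω(z + m(z))) is a rational inner function of degree at most 2, and it has degree 1 (i.e., is an automorphism of 𝔻) if and only if ω = ω̄₁ or ω = ω̄₂. -/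
open Complex Polynomial

lemma normSq_norm (z : ℂ) : Complex.normSq z = ‖z‖ ^ 2 := by
  rw [Complex.normSq_eq_norm_sq]

lemma unit_mul_conj {z : ℂ} (hz : ‖z‖ = 1) : z * starRingEnd ℂ z = 1 := by
  rw [Complex.mul_conj]; norm_cast; rw [normSq_norm, hz]; norm_num

lemma blaschke_lt {α z : ℂ} (hα : ‖α‖ < 1) (hz : ‖z‖ < 1) :
    ‖z - α‖ < ‖1 - starRingEnd ℂ α * z‖ := by
  have key : Complex.normSq (1 - starRingEnd ℂ α * z) - Complex.normSq (z - α)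
      = (1 - Complex.normSq α) * (1 - Complex.normSq z) := by
    simp [Complex.normSq_apply, Complex.mul_re, Complex.mul_im, Complex.conj_re,
      Complex.conj_im, Complex.sub_re, Complex.sub_im, Complex.one_re, Complex.one_im]
    ring
  rw [normSq_norm, normSq_norm, normSq_norm, normSq_norm] at key
  have h1 : (0:ℝ) < 1 - ‖α‖^2 := by nlinarith [norm_nonneg α]
  have h2 : (0:ℝ) < 1 - ‖z‖^2 := by nlinarith [norm_nonneg z]
  have hp : (0:ℝ) < (1 - ‖α‖^2) * (1 - ‖z‖^2) := mul_pos h1 h2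
  nlinarith [norm_nonneg (z - α), norm_nonneg (1 - starRingEnd ℂ α * z)]

lemma blaschke_eq {α z : ℂ} (hz : ‖z‖ = 1) :
    ‖z - α‖ = ‖1 - starRingEnd ℂ α * z‖ := by
  have hz1 := unit_mul_conj hz
  have h : 1 - starRingEnd ℂ α * z = (starRingEnd ℂ (z - α)) * z := by
    rw [map_sub]; linear_combination -hz1
  rw [h, norm_mul, RCLike.norm_conj, hz, mul_one]

lemma one_sub_conj_ne {α z : ℂ} (hα : ‖α‖ < 1) (hz : ‖z‖ ≤ 1) :
    (1 : ℂ) - starRingEnd ℂ α * z ≠ 0 := by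
  intro h
  have h2 : starRingEnd ℂ α * z = 1 := by linear_combination -h
  have : ‖starRingEnd ℂ α * z‖ < 1 := by
    rw [norm_mul, RCLike.norm_conj]
    calc ‖α‖ * ‖z‖ ≤ ‖α‖ * 1 := mul_le_mul_of_nonneg_left hz (norm_nonneg α)
      _ < 1 := by rw [mul_one]; exact hα
  rw [h2] at this; simp at this

lemma m_norm_lt {c α z : ℂ} (hc : ‖c‖ = 1) (hα : ‖α‖ < 1) (hz : ‖z‖ < 1) :
    ‖c * (z - α) / (1 - starRingEnd ℂ α * z)‖ < 1 := by
  rw [norm_div, norm_mul, hc, one_mul, div_lt_one]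
  · exact blaschke_lt hα hz
  · calc (0:ℝ) ≤ ‖z - α‖ := norm_nonneg _
      _ < _ := blaschke_lt hα hz

lemma two_sub_ne {ω w : ℂ} (hω : ‖ω‖ = 1) (hw : ‖w‖ < 2) : 2 - ω * w ≠ 0 := by
  intro h
  have h2 : ω * w = 2 := by linear_combination -h
  have : ‖ω * w‖ < 2 := by rw [norm_mul, hω, one_mul]; exact hw
  rw [h2] at this
  norm_num at this

lemma reflect_id (c α ω z : ℂ) (hc : ‖c‖ = 1) (hω : ‖ω‖ = 1) (hz : ‖z‖ = 1) :
    (2*ω*c + starRingEnd ℂ α) * z^2 + (-(2*ω*c*α + c + 1)) * z + c*α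
    = ω * c * z^2 * starRingEnd ℂ
      ((ω * starRingEnd ℂ α) * z^2 + (-(2*starRingEnd ℂ α + ω + ω*c)) * z + (2 + ω*c*α)) := by
  have hzz := unit_mul_conj hz
  have hcc := unit_mul_conj hc
  have hωω := unit_mul_conj hω
  set zb := starRingEnd ℂ z
  set cb := starRingEnd ℂ c
  set wb := starRingEnd ℂ ω
  simp only [map_add, map_mul, map_neg, map_pow, map_ofNat, map_one, Complex.conj_conj]
  linear_combination (2*ω*c*α*z + c*z + z - c*α*(z*zb+1)) * hzz
    + (-(starRingEnd ℂ α)*z^2*(ω*wb) + z*(ω*wb)*(z*zb)) * hcc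
    + (-(starRingEnd ℂ α)*z^2 + c*z*(z*zb) + z*(z*zb) - c*α*(z*zb)^2) * hωω

lemma reflect_all (c α ω w : ℂ) (hcc : c * starRingEnd ℂ c = 1) (hωω : ω * starRingEnd ℂ ω = 1) :
    (2*ω*c + starRingEnd ℂ α)*w^2 + (-(2*ω*c*α + c + 1))*w + c*α
    = ω*c*( starRingEnd ℂ (2 + ω*c*α) * w^2
        + starRingEnd ℂ (-(2*starRingEnd ℂ α + ω + ω*c)) * w
        + starRingEnd ℂ (ω * starRingEnd ℂ α) ) := by
  simp only [map_add, map_mul, map_neg, map_ofNat, Complex.conj_conj]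
  linear_combination (-(c*α) + w*(c + c*starRingEnd ℂ c)
      - starRingEnd ℂ α*w^2*(c*starRingEnd ℂ c))*hωω + (w - starRingEnd ℂ α*w^2)*hcc

lemma disc_infinite : ({z : ℂ | ‖z‖ < 1}).Infinite := by
  apply Set.infinite_of_injective_forall_mem (f := fun n : ℕ => ((n:ℂ)+2)⁻¹)
  · intro n k h
    simp only at h
    have hn : ((n:ℂ)+2) ≠ 0 := by
      intro h0
      have : ‖(n:ℂ)+2‖ = 0 := by rw [h0]; simp
      rw [show ((n:ℂ)+2) = ((n+2:ℕ):ℂ) by push_cast; ring, Complex.norm_natCast] at this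
      norm_cast at this
    have hk : ((k:ℂ)+2) ≠ 0 := by
      intro h0
      have : ‖(k:ℂ)+2‖ = 0 := by rw [h0]; simp
      rw [show ((k:ℂ)+2) = ((k+2:ℕ):ℂ) by push_cast; ring, Complex.norm_natCast] at this
      norm_cast at this
    field_simp at h
    exact_mod_cast (add_right_cancel h).symm
  · intro n
    simp only [Set.mem_setOf_eq, norm_inv]
    rw [show ((n:ℂ)+2) = ((n+2:ℕ):ℂ) by push_cast; ring, Complex.norm_natCast]
    rw [inv_lt_one_iff₀]
    right
    exact_mod_cast Nat.lt_of_lt_of_le Nat.one_lt_two (by omega)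

lemma aux_rev (c α ν : ℂ) (m : ℂ → ℂ) (hc : ‖c‖ = 1) (hα : ‖α‖ < 1) (hν : ‖ν‖ = 1)
    (hm : ∀ z : ℂ, ‖z‖ ≤ 1 → m z = c * (z - α) / (1 - starRingEnd ℂ α * z))
    (hfe : c * (ν - α) = ν * (1 - starRingEnd ℂ α * ν)) :
    ∃ c' α' : ℂ, ‖c'‖ = 1 ∧ ‖α'‖ < 1 ∧ ∀ z : ℂ, ‖z‖ < 1 →
      (2 * starRingEnd ℂ ν * (z * m z) - (z + m z)) / (2 - starRingEnd ℂ ν * (z + m z)) =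
        c' * (z - α') / (1 - starRingEnd ℂ α' * z) := by
  have hνν := unit_mul_conj hν
  have hcc := unit_mul_conj hc
  set νb := starRingEnd ℂ ν with hνb
  set ab := starRingEnd ℂ α with hab
  set a : ℂ := 2*νb*c + ab with haa
  set d : ℂ := -(νb*(2 + νb*c*α)) with hdd
  have hnormab : ‖ab‖ = ‖α‖ := RCLike.norm_conj α
  have hnormνb : ‖νb‖ = 1 := by rw [hνb, RCLike.norm_conj, hν]
  have hnorma : 2 - ‖α‖ ≤ ‖a‖ := by
    have h2 : ‖(2:ℂ)*νb*c‖ = 2 := by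
      rw [norm_mul, norm_mul, hnormνb, hc]; norm_num
    have key : ‖(2*νb*c + ab) + -ab‖ ≤ ‖2*νb*c + ab‖ + ‖-ab‖ := norm_add_le _ _
    rw [add_neg_cancel_right, norm_neg, hnormab, h2, ← haa] at key
    linarith
  have ha0 : a ≠ 0 := by
    intro h
    rw [h, norm_zero] at hnorma; linarith
  have hdval : d = -(νb^2 * c * starRingEnd ℂ a) := by
    rw [haa, hdd]
    simp only [map_add, map_mul, map_ofNat, Complex.conj_conj, hνb, hab]
    linear_combination (2*(starRingEnd ℂ ν)*c*(starRingEnd ℂ c))*hνν + (2*(starRingEnd ℂ ν))*hcc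
  have hnormd : ‖d‖ = ‖a‖ := by
    rw [hdval]; rw [norm_neg, norm_mul, norm_mul, norm_pow, hnormνb, hc, RCLike.norm_conj]
    simp
  have hd0 : d ≠ 0 := by
    intro h; rw [h, norm_zero] at hnormd
    exact ha0 (norm_eq_zero.mp hnormd.symm)
  refine ⟨a/d, c*α*νb/a, ?_, ?_, ?_⟩
  · rw [norm_div, hnormd, div_self]
    intro h; simp at h; exact ha0 h
  · rw [norm_div, norm_mul, norm_mul, hc, hnormνb, one_mul, mul_one, div_lt_one]
    · linarith
    · linarith [norm_nonneg α]
  · intro z hz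
    have hu : (1:ℂ) - ab * z ≠ 0 := one_sub_conj_ne hα hz.le
    have hmz := hm z hz.le
    have hmlt : ‖m z‖ < 1 := by rw [hmz]; exact m_norm_lt hc hα hz
    have hD : 2 - νb * (z + m z) ≠ 0 := by
      apply two_sub_ne hnormνb
      calc ‖z + m z‖ ≤ ‖z‖ + ‖m z‖ := norm_add_le _ _
        _ < 2 := by linarith
    -- numerator and denominator factorizations
    have hNum : 2*νb*c*z*(z-α) - z*(1 - ab*z) - c*(z-α) = (z - ν)*(a*z - c*α*νb) := by
      rw [haa]
      linear_combination (z*νb)*hfe + (-(c*α) + 2*c*z - z*(c - 1 + ab*ν))*hνν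
    have hDen : 2*(1 - ab*z) - νb*(z*(1 - ab*z) + c*(z-α)) = (z - ν)*(νb*ab*z + d) := by
      rw [hdd]
      linear_combination (-(z*νb^2))*hfe + (-(2+νb*c*α) + 2*ab*z + z*νb*(c-1+ab*ν))*hνν
    have hN : 2*νb*(z*m z) - (z + m z) = ((z - ν)*(a*z - c*α*νb))/(1 - ab*z) := by
      rw [hmz, ← hNum]; simp only [div_eq_mul_inv]; linear_combination z * mul_inv_cancel₀ hu
      try ring
    have hDe : 2 - νb*(z + m z) = ((z - ν)*(νb*ab*z + d))/(1 - ab*z) := by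
      rw [hmz, ← hDen]; simp only [div_eq_mul_inv]; linear_combination (-(2 - νb*z)) * mul_inv_cancel₀ hu
      try ring
    have hzν : z - ν ≠ 0 := by
      intro h
      have : z = ν := by linear_combination h
      rw [this, hν] at hz; linarith
    have hB0 : νb*ab*z + d ≠ 0 := by
      intro h
      have hd' : d = -(νb*ab*z) := by linear_combination h
      have : ‖d‖ ≤ ‖α‖ := by
        rw [hd', norm_neg, norm_mul, norm_mul, hnormνb, hnormab, one_mul]
        calc ‖α‖ * ‖z‖ ≤ ‖α‖ * 1 := mul_le_mul_of_nonneg_left hz.le (norm_nonneg α)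
          _ = ‖α‖ := mul_one _
      rw [hnormd] at this; linarith
    rw [hN, hDe, div_div_div_comm, div_self hu, div_one,
      mul_div_mul_left _ _ hzν]
    -- now : (a*z - c*α*νb)/(νb*ab*z + d) = (a/d) * (z - c*α*νb/a) / (1 - conj (c*α*νb/a) * z)
    have hconj : starRingEnd ℂ (c*α*νb/a) = -(νb * ab)/d := by
      rw [map_div₀, map_mul, map_mul, Complex.conj_conj, ← hab]
      rw [div_eq_div_iff (by intro h; exact ha0 (by simpa using h)) hd0]
      rw [hdval]
      linear_combination (-(ab*νb*(starRingEnd ℂ a)*c*(starRingEnd ℂ c)))*hνν + (-(ab*νb*(starRingEnd ℂ a)))*hcc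
    rw [hconj]
    have hβz : (1:ℂ) - (-(νb*ab)/d) * z ≠ 0 := by
      rw [div_mul_eq_mul_div, sub_div' hd0]
      apply div_ne_zero _ hd0
      intro h
      have hd' : d = -(νb*ab*z) := by linear_combination h
      have : ‖d‖ ≤ ‖α‖ := by
        rw [hd', norm_neg, norm_mul, norm_mul, hnormνb, hnormab, one_mul]
        calc ‖α‖ * ‖z‖ ≤ ‖α‖ * 1 := mul_le_mul_of_nonneg_left hz.le (norm_nonneg α)
          _ = ‖α‖ := mul_one _
      rw [hnormd] at this; linarith
    rw [div_eq_div_iff hB0 hβz]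
    field_simp
    ring


theorem purely_balanced_degree
    (c α ω₁ ω₂ : ℂ) (hc : ‖c‖ = 1) (hα : ‖α‖ < 1)
    (m : ℂ → ℂ) (hm : ∀ z : ℂ, ‖z‖ ≤ 1 → m z = c * (z - α) / (1 - starRingEnd ℂ α * z))
    (hω₁ : ‖ω₁‖ = 1) (hω₂ : ‖ω₂‖ = 1) (hne : ω₁ ≠ ω₂)
    -- `m` is hyperbolic: its fixed points in the closed disc are exactly `ω₁` and `ω₂`
    (hfix : ∀ z : ℂ, ‖z‖ ≤ 1 → (m z = z ↔ z = ω₁ ∨ z = ω₂)) :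
    ∀ ω : ℂ, ‖ω‖ = 1 →
      -- `Φ_ω ∘ h_m` is a rational inner function of degree at most 2
      (∃ P Q : Polynomial ℂ, P.degree ≤ 2 ∧ Q.degree ≤ 2 ∧
        (∀ z : ℂ, ‖z‖ < 1 → Q.eval z ≠ 0 ∧
          (2 * ω * (z * m z) - (z + m z)) / (2 - ω * (z + m z)) = P.eval z / Q.eval z) ∧
        (∀ z : ℂ, ‖z‖ = 1 → Q.eval z ≠ 0 → ‖P.eval z / Q.eval z‖ = 1)) ∧
      -- the degree reduces to 1, i.e. `Φ_ω ∘ h_m` is an automorphism of `𝔻`,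
      -- exactly when `ω = conj ω₁` or `ω = conj ω₂`
      ((∃ c' α' : ℂ, ‖c'‖ = 1 ∧ ‖α'‖ < 1 ∧ ∀ z : ℂ, ‖z‖ < 1 →
          (2 * ω * (z * m z) - (z + m z)) / (2 - ω * (z + m z)) =
            c' * (z - α') / (1 - starRingEnd ℂ α' * z)) ↔
        ω = starRingEnd ℂ ω₁ ∨ ω = starRingEnd ℂ ω₂) := by
  -- basic consequences of the hypotheses
  have hαne : α ≠ 0 := by
    intro h0
    have hm0 : m 0 = 0 := by
      rw [hm 0 (by norm_num), h0]; simp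
    rcases (hfix 0 (by norm_num)).mp hm0 with h | h
    · rw [← h] at hω₁; simp at hω₁
    · rw [← h] at hω₂; simp at hω₂
  have hfe : ∀ ν : ℂ, ‖ν‖ = 1 → m ν = ν →
      c * (ν - α) = ν * (1 - starRingEnd ℂ α * ν) := by
    intro ν hν hmν
    have hu := one_sub_conj_ne hα hν.le
    rw [hm ν hν.le] at hmν
    rw [div_eq_iff hu] at hmν
    linear_combination hmν
  have hfe1 : c * (ω₁ - α) = ω₁ * (1 - starRingEnd ℂ α * ω₁) :=
    hfe ω₁ hω₁ ((hfix ω₁ hω₁.le).mpr (Or.inl rfl))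
  have hfe2 : c * (ω₂ - α) = ω₂ * (1 - starRingEnd ℂ α * ω₂) :=
    hfe ω₂ hω₂ ((hfix ω₂ hω₂.le).mpr (Or.inr rfl))
  intro ω hω
  set Q : Polynomial ℂ := C (ω * starRingEnd ℂ α) * X^2
      + C (-(2*starRingEnd ℂ α + ω + ω*c)) * X + C (2 + ω*c*α) with hQdef
  set P : Polynomial ℂ := C (2*ω*c + starRingEnd ℂ α) * X^2
      + C (-(2*ω*c*α + c + 1)) * X + C (c*α) with hPdef
  have hQev : ∀ z : ℂ, Q.eval z = (ω * starRingEnd ℂ α) * z^2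
      + (-(2*starRingEnd ℂ α + ω + ω*c)) * z + (2 + ω*c*α) := by
    intro z; rw [hQdef]; simp
  have hPev : ∀ z : ℂ, P.eval z = (2*ω*c + starRingEnd ℂ α) * z^2
      + (-(2*ω*c*α + c + 1)) * z + (c*α) := by
    intro z; rw [hPdef]; simp
  have hmlt : ∀ z : ℂ, ‖z‖ < 1 → ‖m z‖ < 1 := by
    intro z hz; rw [hm z hz.le]; exact m_norm_lt hc hα hz
  have hQfact : ∀ z : ℂ, ‖z‖ ≤ 1 →
      Q.eval z = (2 - ω*(z + m z)) * (1 - starRingEnd ℂ α * z) := by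
    intro z hz
    have hu := one_sub_conj_ne hα hz
    rw [hQev, hm z hz]
    field_simp
    ring
  have hPfact : ∀ z : ℂ, ‖z‖ ≤ 1 →
      P.eval z = (2*ω*(z * m z) - (z + m z)) * (1 - starRingEnd ℂ α * z) := by
    intro z hz
    have hu := one_sub_conj_ne hα hz
    rw [hPev, hm z hz]
    field_simp
    ring
  have hQne : ∀ z : ℂ, ‖z‖ < 1 → Q.eval z ≠ 0 := by
    intro z hz
    rw [hQfact z hz.le]
    apply mul_ne_zero
    · apply two_sub_ne hω
      calc ‖z + m z‖ ≤ ‖z‖ + ‖m z‖ := norm_add_le _ _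
        _ < 2 := by linarith [hmlt z hz]
    · exact one_sub_conj_ne hα hz.le
  have hratio : ∀ z : ℂ, ‖z‖ < 1 →
      (2*ω*(z * m z) - (z + m z)) / (2 - ω*(z + m z)) = P.eval z / Q.eval z := by
    intro z hz
    rw [hPfact z hz.le, hQfact z hz.le,
      mul_div_mul_right _ _ (one_sub_conj_ne hα hz.le)]
  constructor
  · -- rational inner of degree at most 2
    refine ⟨P, Q, ?_, ?_, fun z hz => ⟨hQne z hz, hratio z hz⟩, ?_⟩
    · rw [hPdef]; exact degree_quadratic_le
    · rw [hQdef]; exact degree_quadratic_le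
    · intro z hz hQz
      have hid : P.eval z = ω * c * z^2 * starRingEnd ℂ (Q.eval z) := by
        rw [hPev, hQev]; exact reflect_id c α ω z hc hω hz
      rw [norm_div, hid, norm_mul, norm_mul, norm_mul, hω, hc, norm_pow, hz,
        RCLike.norm_conj]
      simp only [one_mul, one_pow]
      exact div_self (norm_ne_zero_iff.mpr hQz)
  constructor
  · -- degree one implies ω is a conjugate fixed point
    rintro ⟨c', α', hc', hα', hfun⟩
    set β := starRingEnd ℂ α' with hβdef
    -- the polynomial identity
    have hFz : ∀ z : ℂ, ‖z‖ < 1 →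
        P.eval z * (1 - β * z) - c' * (z - α') * Q.eval z = 0 := by
      intro z hz
      have h1 := hfun z hz
      rw [hratio z hz] at h1
      have hβz : (1:ℂ) - β * z ≠ 0 := one_sub_conj_ne hα' hz.le
      rw [div_eq_div_iff (hQne z hz) hβz] at h1
      linear_combination h1
    have hF : P * (1 - Polynomial.C β * X) - Polynomial.C c' * (X - Polynomial.C α') * Q = 0 := by
      apply Polynomial.eq_zero_of_infinite_isRoot
      apply Set.Infinite.mono _ disc_infinite
      intro z hz
      simp only [Set.mem_setOf_eq, IsRoot.def, eval_sub, eval_mul, eval_one, eval_C, eval_X]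
      have := hFz z hz
      linear_combination this
    by_cases hbd : ∃ z : ℂ, ‖z‖ = 1 ∧ Q.eval z = 0
    · obtain ⟨z, hz1, hQ0⟩ := hbd
      have hu := one_sub_conj_ne hα (le_of_eq hz1)
      have h2 : 2 - ω*(z + m z) = 0 := by
        rw [hQfact z hz1.le] at hQ0
        rcases mul_eq_zero.mp hQ0 with h | h
        · exact h
        · exact absurd h hu
      have hsum : ω * (z + m z) = 2 := by linear_combination -h2
      have hnm : ‖m z‖ = 1 := by
        rw [hm z hz1.le, norm_div, norm_mul, hc, one_mul, blaschke_eq hz1,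
          div_self (norm_ne_zero_iff.mpr hu)]
      have h4 : ‖z + m z‖ = 2 := by
        have := congrArg norm hsum
        rw [norm_mul, hω, one_mul] at this
        rw [this]
        norm_num
      have hns : Complex.normSq (z + m z) = 4 := by
        rw [normSq_norm, h4]; norm_num
      rw [Complex.normSq_add, normSq_norm, normSq_norm, hz1, hnm] at hns
      have hre : (z * starRingEnd ℂ (m z)).re = 1 := by
        norm_num at hns
        simp only [Complex.mul_re, Complex.conj_re, Complex.conj_im, mul_neg, sub_neg_eq_add]
        linarith
      have hnw : Complex.normSq (z * starRingEnd ℂ (m z)) = 1 := by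
        rw [Complex.normSq_mul, normSq_norm, normSq_norm, hz1, RCLike.norm_conj, hnm]
        norm_num
      have him : (z * starRingEnd ℂ (m z)).im = 0 := by
        rw [Complex.normSq_apply, hre] at hnw
        nlinarith
      have hw1 : z * starRingEnd ℂ (m z) = 1 := by
        apply Complex.ext
        · rw [hre]; norm_num
        · rw [him]; norm_num
      have hmzz : m z = z := by
        have hmzn := unit_mul_conj hnm
        have h5 : (z - m z) * starRingEnd ℂ (m z) = 0 := by
          linear_combination hw1 - hmzn
        rcases mul_eq_zero.mp h5 with h | h
        · have : z = m z := by linear_combination h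
          exact this.symm
        · exfalso
          have : ‖starRingEnd ℂ (m z)‖ = 1 := by rw [RCLike.norm_conj, hnm]
          rw [h] at this; simp at this
      have hz12 := (hfix z hz1.le).mp hmzz
      have hωz : ω * z = 1 := by
        rw [hmzz] at hsum
        linear_combination hsum / 2
      have hzz := unit_mul_conj hz1
      have hωconj : ω = starRingEnd ℂ z := by
        have hz0 : z ≠ 0 := by
          intro h; rw [h, norm_zero] at hz1; norm_num at hz1
        have h6 : (ω - starRingEnd ℂ z) * z = 0 := by
          linear_combination hωz - hzz
        rcases mul_eq_zero.mp h6 with h | h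
        · linear_combination h
        · exact absurd h hz0
      rcases hz12 with h | h
      · left; rw [hωconj, h]
      · right; rw [hωconj, h]
    · exfalso
      push_neg at hbd
      have hQout : ∀ w : ℂ, Q.eval w = 0 → 1 < ‖w‖ := by
        intro w hw
        by_contra hcon
        push_neg at hcon
        rcases lt_or_eq_of_le hcon with h | h
        · exact hQne w h hw
        · exact hbd w h hw
      have hcc := unit_mul_conj hc
      have hωω := unit_mul_conj hω
      have hP0 : ∀ w : ℂ, 1 ≤ ‖w‖ → P.eval w ≠ 0 := by
        intro w hw hPw
        have hw0 : w ≠ 0 := by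
          intro h; rw [h, norm_zero] at hw; linarith
        have hcw0 : starRingEnd ℂ w ≠ 0 := by
          simpa using hw0
        have hid := reflect_all c α ω w hcc hωω
        rw [hPev] at hPw
        rw [hPw] at hid
        have hωc0 : ω * c ≠ 0 := by
          apply mul_ne_zero
          · intro h; rw [h, norm_zero] at hω; norm_num at hω
          · intro h; rw [h, norm_zero] at hc; norm_num at hc
        have hsum0 : starRingEnd ℂ (2 + ω*c*α) * w^2
            + starRingEnd ℂ (-(2*starRingEnd ℂ α + ω + ω*c)) * w
            + starRingEnd ℂ (ω * starRingEnd ℂ α) = 0 := by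
          rcases mul_eq_zero.mp hid.symm with h | h
          · exact absurd h hωc0
          · exact h
        have hQw : Q.eval ((starRingEnd ℂ w)⁻¹) * (starRingEnd ℂ w)^2
            = starRingEnd ℂ (starRingEnd ℂ (2 + ω*c*α) * w^2
              + starRingEnd ℂ (-(2*starRingEnd ℂ α + ω + ω*c)) * w
              + starRingEnd ℂ (ω * starRingEnd ℂ α)) := by
          rw [hQev]
          simp only [map_add, map_mul, map_neg, map_pow, map_ofNat, map_one, Complex.conj_conj]
          field_simp
          ring
        rw [hsum0, map_zero] at hQw
        have hQr : Q.eval ((starRingEnd ℂ w)⁻¹) = 0 := by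
          rcases mul_eq_zero.mp hQw with h | h
          · exact h
          · exact absurd (pow_eq_zero_iff (by norm_num) |>.mp h) hcw0
        have := hQout _ hQr
        rw [norm_inv, RCLike.norm_conj] at this
        have : ‖w‖⁻¹ ≤ 1 := by
          rw [inv_le_one_iff₀]
          right; exact hw
        linarith [hQout _ hQr, (by rw [norm_inv, RCLike.norm_conj] : ‖(starRingEnd ℂ w)⁻¹‖ = ‖w‖⁻¹)]
      have hq20 : ω * starRingEnd ℂ α ≠ 0 := by
        apply mul_ne_zero
        · intro h; rw [h, norm_zero] at hω; norm_num at hω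
        · intro h
          apply hαne
          simpa using congrArg (starRingEnd ℂ) h
      have hQdeg : Q.degree = 2 := by
        rw [hQdef]; exact degree_quadratic hq20
      obtain ⟨r, hr⟩ := Complex.exists_root (f := Q) (by rw [hQdeg]; norm_num)
      have hQr : Q.eval r = 0 := hr
      have hr1 : 1 < ‖r‖ := hQout r hQr
      have hroot_beta : ∀ w : ℂ, Q.eval w = 0 → β * w = 1 := by
        intro w hw
        have h1 : P.eval w * (1 - β * w) - c' * (w - α') * Q.eval w = 0 := by
          have := congrArg (Polynomial.eval w) hF
          simpa using this
        rw [hw, mul_zero, sub_zero] at h1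
        rcases mul_eq_zero.mp h1 with h | h
        · exact absurd h (hP0 w (hQout w hw).le)
        · linear_combination -h
      have hβr := hroot_beta r hQr
      have hβ0 : β ≠ 0 := by
        intro h; rw [h, zero_mul] at hβr; exact zero_ne_one hβr
      obtain ⟨Q1, hQ1⟩ := (Polynomial.dvd_iff_isRoot.mpr hr : (X - Polynomial.C r) ∣ Q)
      have hQ1deg : Q1.degree = 1 := by
        have hd := hQdeg
        rw [hQ1, Polynomial.degree_mul, Polynomial.degree_X_sub_C] at hd
        have h21 : (1 : WithBot ℕ) + 1 = 1 + Q1.degree := by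
          rw [hd]; decide
        exact (WithBot.add_left_cancel (by norm_num) h21).symm
      obtain ⟨r₂, hr₂⟩ := Complex.exists_root (f := Q1) (by rw [hQ1deg]; norm_num)
      have hQr₂ : Q.eval r₂ = 0 := by
        rw [hQ1, Polynomial.eval_mul, hr₂.eq_zero, mul_zero]
      have hβr₂ := hroot_beta r₂ hQr₂
      have hrr₂ : r₂ = r := by
        have h7 : β * (r - r₂) = 0 := by linear_combination hβr - hβr₂
        rcases mul_eq_zero.mp h7 with h | h
        · exact absurd h hβ0
        · linear_combination -h
      have hQ1r : Q1.eval r = 0 := by rw [← hrr₂]; exact hr₂.eq_zero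
      -- cancel the common factor
      have hCβr : Polynomial.C β * Polynomial.C r = (1 : Polynomial ℂ) := by
        rw [← Polynomial.C_mul, hβr, Polynomial.C_1]
      have hcancel : P * (-Polynomial.C β) = Polynomial.C c' * (X - Polynomial.C α') * Q1 := by
        apply mul_right_cancel₀ (Polynomial.X_sub_C_ne_zero r)
        have hlin : (1 : Polynomial ℂ) - Polynomial.C β * X
            = -Polynomial.C β * (X - Polynomial.C r) := by
          linear_combination -hCβr
        calc P * (-Polynomial.C β) * (X - Polynomial.C r)
            = P * (1 - Polynomial.C β * X) := by rw [hlin]; ring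
          _ = Polynomial.C c' * (X - Polynomial.C α') * Q := by linear_combination hF
          _ = Polynomial.C c' * (X - Polynomial.C α') * Q1 * (X - Polynomial.C r) := by
              rw [hQ1]; ring
      have hevr := congrArg (Polynomial.eval r) hcancel
      simp only [Polynomial.eval_mul, Polynomial.eval_neg, Polynomial.eval_C, hQ1r,
        mul_zero] at hevr
      rcases mul_eq_zero.mp hevr with h | h
      · exact hP0 r hr1.le h
      · rw [neg_eq_zero] at h; exact hβ0 h
  · -- conjugate fixed points give degree one
    rintro (h | h)
    · subst h
      exact aux_rev c α ω₁ m hc hα hω₁ hm hfe1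
    · subst h
      exact aux_rev c α ω₂ m hc hα hω₂ hm hfe2
end
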